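/- If the additive group of a ring $K$ is finitely generated, then $K$ is finitely separable: for every element $a \in K$ and every subring $A \subseteq K$ with $a \notin A$, there exists a finite ring $F$ and a ring homomorphism $\varphi : K \to F$ such that $\varphi(a) \notin \varphi(A)$. -/

import Mathlib

/-- A (not necessarily unital) ring `K` is finitely separable if every element `a`
lying outside a subring `A` can be separated from `A` by a homomorphism to a finite ring. -/
def IsFinSep (K : Type) [NonUnitalRing K] : Prop :=
  ∀ (a : K) (A : NonUnitalSubring K), a ∉ A →
    ∃ (F : Type) (_ : NonUnitalRing F) (_ : Finite F),
      ∃ φ : K →ₙ+* F, φ a ∉ ⇑φ '' (A : Set K)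

/-- `ppow a n = a ^ (n + 1)`, the positive powers of `a` in a non-unital ring. -/
def ppow {K : Type} [NonUnitalRing K] (a : K) : ℕ → K
  | 0 => a
  | n + 1 => ppow a n * a

/-- Evaluation of an integer polynomial (whose constant term is ignored, hence
meaningful for polynomials with zero constant term) at an element of a non-unital ring. -/
def evalnc {K : Type} [NonUnitalRing K] (p : Polynomial ℤ) (a : K) : K :=
  ∑ i ∈ Finset.range p.natDegree, p.coeff (i + 1) • ppow a i

/-- In a finitely generated abelian group, any nonzero element avoids `n • Q`
for some positive `n`. -/
lemma exists_nsmul_not_mem {Q : Type} [AddCommGroup Q] (h : AddGroup.FG Q) (q : Q)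
    (hq : q ≠ 0) : ∃ n : ℕ, 0 < n ∧ ∀ x : Q, q ≠ n • x := by
  obtain ⟨r, ι, fι, p, hp, e, ⟨f⟩⟩ := AddCommGroup.equiv_free_prod_directSum_zmod Q
  haveI : ∀ i, NeZero (p i ^ e i) := fun i => ⟨pow_ne_zero _ (hp i).pos.ne'⟩
  haveI : Finite (DirectSum ι fun i => ZMod (p i ^ e i)) :=
    Finite.of_equiv _ (DFinsupp.equivFunOnFintype (β := fun i => ZMod (p i ^ e i))).symm
  by_cases hv : (f q).1 = 0
  · -- torsion case: `f q` lives in the finite part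
    refine ⟨Nat.card (DirectSum ι fun i => ZMod (p i ^ e i)), Nat.card_pos, fun x hx => ?_⟩
    apply hq
    have h2 : f q = 0 := by
      have := congrArg (fun y => (f y).2) hx
      simp only [map_nsmul, Prod.smul_snd, card_nsmul_eq_zero'] at this
      exact Prod.ext hv this
    simpa using f.injective (by simpa using h2)
  · -- free case: some coordinate of the free part is nonzero
    obtain ⟨i, hi⟩ : ∃ i, (f q).1 i ≠ 0 := by
      by_contra hcon
      push_neg at hcon
      exact hv (Finsupp.ext hcon)
    refine ⟨((f q).1 i).natAbs + 1, Nat.succ_pos _, fun x hx => ?_⟩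
    have hcoord : (f q).1 i = (((f q).1 i).natAbs + 1 : ℕ) • ((f x).1 i) := by
      have := congrArg (fun y => (f y).1 i) hx
      simpa [map_nsmul] using this
    have hdvd : ((((f q).1 i).natAbs + 1 : ℕ) : ℤ) ∣ (f q).1 i :=
      ⟨(f x).1 i, by rw [nsmul_eq_mul] at hcoord; exact hcoord⟩
    have hle := Nat.le_of_dvd (Int.natAbs_pos.2 hi) (Int.natAbs_dvd_natAbs.2 hdvd)
    rw [Int.natAbs_natCast] at hle
    omega

/-- If the additive group of a ring is finitely generated, the ring is finitely separable. -/
theorem stmt0 (K : Type) [NonUnitalRing K] (h : AddGroup.FG K) : IsFinSep K := by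
  intro a A ha
  set N : AddSubgroup K := A.toAddSubgroup with hN
  have hfgQ : AddGroup.FG (K ⧸ N) :=
    AddGroup.fg_of_surjective (f := QuotientAddGroup.mk' N)
      (QuotientAddGroup.mk'_surjective N)
  have hq : (QuotientAddGroup.mk a : K ⧸ N) ≠ 0 := fun h0 =>
    ha ((QuotientAddGroup.eq_zero_iff a).1 h0)
  obtain ⟨n, hn, hsep⟩ := exists_nsmul_not_mem hfgQ _ hq
  -- the two-sided ideal `n • K`
  let I : TwoSidedIdeal K := TwoSidedIdeal.mk' (Set.range fun z : K => n • z)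
    ⟨0, smul_zero n⟩
    (by rintro _ _ ⟨z, rfl⟩ ⟨w, rfl⟩; exact ⟨z + w, by simp [smul_add]⟩)
    (by rintro _ ⟨z, rfl⟩; exact ⟨-z, by simp⟩)
    (by rintro x _ ⟨z, rfl⟩; exact ⟨x * z, by simp [mul_smul_comm]⟩)
    (by rintro _ y ⟨z, rfl⟩; exact ⟨z * y, by simp [smul_mul_assoc]⟩)
  let c : RingCon K := I.ringCon
  let φ : K →ₙ+* c.Quotient :=
    { toFun := fun x => (x : c.Quotient)
      map_add' := fun _ _ => rfl
      map_mul' := fun _ _ => rfl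
      map_zero' := rfl }
  have hker : ∀ x y : K, φ x = φ y ↔ ∃ z : K, x - y = n • z := by
    intro x y
    constructor
    · intro hxy
      have h1 : c x y := Quotient.eq''.1 hxy
      have h2 := (I.rel_iff x y).1 h1
      simp only [I, TwoSidedIdeal.mem_mk', Set.mem_range] at h2
      obtain ⟨z, hz⟩ := h2
      exact ⟨z, by simpa using hz.symm⟩
    · rintro ⟨z, hz⟩
      refine Quotient.sound' ?_
      refine (I.rel_iff x y).2 ?_
      simp only [I, TwoSidedIdeal.mem_mk', Set.mem_range]
      exact ⟨z, by simpa using hz.symm⟩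
  -- finiteness of the quotient
  let M : AddSubgroup K :=
    { carrier := Set.range fun z : K => n • z
      zero_mem' := ⟨0, smul_zero n⟩
      add_mem' := by rintro _ _ ⟨z, rfl⟩ ⟨w, rfl⟩; exact ⟨z + w, by simp [smul_add]⟩
      neg_mem' := by rintro _ ⟨z, rfl⟩; exact ⟨-z, by simp⟩ }
  have hfin : Finite c.Quotient := by
    have hMfin : Finite (K ⧸ M) := by
      have hfgM : AddGroup.FG (K ⧸ M) :=
        AddGroup.fg_of_surjective (f := QuotientAddGroup.mk' M)
          (QuotientAddGroup.mk'_surjective M)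
      refine AddCommGroup.finite_of_fg_torsion _ (fun x => ?_)
      refine isOfFinAddOrder_iff_nsmul_eq_zero.2 ⟨n, hn, ?_⟩
      obtain ⟨y, rfl⟩ := QuotientAddGroup.mk'_surjective M x
      have : ((n • y : K) : K ⧸ M) = 0 := (QuotientAddGroup.eq_zero_iff _).2 ⟨y, rfl⟩
      simpa using this
    have hliftker : ∀ x ∈ M, φ.toAddMonoidHom x = 0 := by
      rintro _ ⟨z, rfl⟩
      show φ (n • z) = φ 0
      rw [hker]
      exact ⟨z, by simp⟩
    have hsurj : Function.Surjective (QuotientAddGroup.lift M φ.toAddMonoidHom hliftker) := by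
      intro y
      obtain ⟨x, hx⟩ := Quotient.exists_rep y
      exact ⟨QuotientAddGroup.mk x, hx⟩
    exact Finite.of_surjective _ hsurj
  refine ⟨c.Quotient, inferInstance, hfin, φ, ?_⟩
  rintro ⟨b, hb, hba⟩
  have := (hker b a).1 hba
  obtain ⟨z, hz⟩ := this
  apply hsep ((QuotientAddGroup.mk' N) (-z))
  have hbz : a = b + n • (-z) := by rw [smul_neg, ← hz]; abel
  have hb0 : (QuotientAddGroup.mk' N) b = 0 := (QuotientAddGroup.eq_zero_iff b).2 hb
  show (QuotientAddGroup.mk' N) a = n • (QuotientAddGroup.mk' N) (-z)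
  rw [hbz, map_add, map_nsmul, hb0, zero_add]
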